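/- Suppose a = 0 and d ≠ 0 and e ≠ 0. If the quadratic form Q = b·z2² + c·z3² + 2d·z1z2 + 2e·z1z3 + 2f·z2z3 factors as Q = L1·L2 for degree-one elements L1, L2 of S, then either 2f = be·d⁻¹ + μ23·cd·e⁻¹ (in which case Q = 2·(z1 + (2d)⁻¹b·z2 + (2e)⁻¹c·z3)·(d·z2 + e·z3)), or 2f = μ12μ23·be·(μ13·d)⁻¹ + μ13·cd·(μ12·e)⁻¹ (in which case Q = 2·(μ21·d·z2 + μ31·e·z3)·(z1 + μ12·b·(2d)⁻¹·z2 + μ13·c·(2e)⁻¹·z3)). -/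

import Mathlib

/-- `Q = L·L'` in the skew polynomial algebra on three generators (relations
`zj·zi = μij·zi·zj` for `i < j`), expressed via coefficients; here
`L = p.1·z1 + p.2.1·z2 + p.2.2·z3` and `L' = q.1·z1 + q.2.1·z2 + q.2.2·z3`. -/
def IsFactorization3 {k : Type*} [Field k] (μ12 μ13 μ23 a b c d e f : k)
    (p q : k × k × k) : Prop :=
  p.1 * q.1 = a ∧ p.2.1 * q.2.1 = b ∧ p.2.2 * q.2.2 = c ∧
  p.1 * q.2.1 + μ12 * p.2.1 * q.1 = 2 * d ∧
  p.1 * q.2.2 + μ13 * p.2.2 * q.1 = 2 * e ∧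
  p.2.1 * q.2.2 + μ23 * p.2.2 * q.2.1 = 2 * f

/-- Suppose `a = 0`, `d ≠ 0`, `e ≠ 0`. If
`Q = b·z2² + c·z3² + 2d·z1z2 + 2e·z1z3 + 2f·z2z3` factors as a product of two
degree-one elements, then either `2f = be·d⁻¹ + μ23·cd·e⁻¹` and
`Q = 2·(z1 + (2d)⁻¹b·z2 + (2e)⁻¹c·z3)·(d·z2 + e·z3)`, or
`2f = μ12μ23·be·(μ13·d)⁻¹ + μ13·cd·(μ12·e)⁻¹` and
`Q = 2·(μ21·d·z2 + μ31·e·z3)·(z1 + μ12·b·(2d)⁻¹·z2 + μ13·c·(2e)⁻¹·z3)`. -/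
theorem factorization_dichotomy_a_eq_zero {k : Type*} [Field k] [IsAlgClosed k]
    (h2 : (2 : k) ≠ 0) (μ12 μ13 μ23 : k)
    (hμ12 : μ12 ≠ 0) (hμ13 : μ13 ≠ 0) (hμ23 : μ23 ≠ 0)
    (b c d e f : k) (hd : d ≠ 0) (he : e ≠ 0)
    (hfact : ∃ p q : k × k × k, IsFactorization3 μ12 μ13 μ23 0 b c d e f p q) :
    (2 * f = b * e * d⁻¹ + μ23 * c * d * e⁻¹ ∧
      IsFactorization3 μ12 μ13 μ23 0 b c d e f
        ((2 : k) • ((1 : k), (2 * d)⁻¹ * b, (2 * e)⁻¹ * c))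
        ((0 : k), d, e)) ∨
    (2 * f = μ12 * μ23 * b * e * (μ13 * d)⁻¹ + μ13 * c * d * (μ12 * e)⁻¹ ∧
      IsFactorization3 μ12 μ13 μ23 0 b c d e f
        ((2 : k) • ((0 : k), μ12⁻¹ * d, μ13⁻¹ * e))
        ((1 : k), μ12 * b * (2 * d)⁻¹, μ13 * c * (2 * e)⁻¹)) := by
  obtain ⟨⟨p1, p2, p3⟩, ⟨q1, q2, q3⟩, h1, hb, hc, h4, h5, h6⟩ := hfact
  simp only [IsFactorization3] at *
  rcases mul_eq_zero.mp h1 with hp1 | hq1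
  · -- p1 = 0, second branch
    subst hp1
    simp only [zero_mul, zero_add] at h4 h5
    have h2' : (2:k)⁻¹ * 2 = 1 := inv_mul_cancel₀ h2
    have key : 2 * f = μ12 * μ23 * b * e * (μ13 * d)⁻¹ + μ13 * c * d * (μ12 * e)⁻¹ := by
      field_simp
      linear_combination (μ13^2*d^2*p3*q3 + μ12^2*e^2*μ23*q2*p2
          - μ13*d*μ12*e*μ23*p3*q2 - μ13*d*μ12*e*q3*p2) * h2' + -(μ12*μ13*d*e)*h6 + μ12^2*μ23*e^2*hb + μ13^2*d^2*hc
        + (μ13*p3*(μ13*d*q3 - μ12*μ23*e*q2)/2)*h4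
        - (μ12*p2*(μ13*d*q3 - μ12*μ23*e*q2)/2)*h5
    right
    refine ⟨key, ?_⟩
    simp only [Prod.smul_mk, smul_eq_mul]
    refine ⟨by ring, by field_simp, by field_simp, by field_simp; ring, by field_simp; ring, ?_⟩
    rw [key]; field_simp; ring
  · -- q1 = 0, first branch
    subst hq1
    simp only [mul_zero, add_zero] at h4 h5
    have h2' : (2:k)⁻¹ * 2 = 1 := inv_mul_cancel₀ h2
    have key : 2 * f = b * e * d⁻¹ + μ23 * c * d * e⁻¹ := by
      field_simp
      linear_combination (d^2*μ23*p3*q3 + e^2*p2*q2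
          - d*e*μ23*p3*q2 - d*e*p2*q3) * h2' + -(d*e)*h6 + e^2*hb + μ23*d^2*hc
        - ((p2*e - μ23*p3*d)*q3/2)*h4
        + ((p2*e - μ23*p3*d)*q2/2)*h5
    left
    refine ⟨key, ?_⟩
    simp only [Prod.smul_mk, smul_eq_mul]
    refine ⟨by ring, by field_simp, by field_simp, by field_simp; ring, by field_simp; ring, ?_⟩
    rw [key]; field_simp
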